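/- Let D be an integrally closed integral domain and ⋆ a semistar operation on D such that D is a ⋆-domain. Then for all E, F ∈ f(D): (E :_D F)^⋆ = (E^⋆ :_{D^⋆} F). In particular, D is a ((⋆̄)_f, ⋆_f)-domain, and consequently (E ∩ F)^⋆ = E^⋆ ∩ F^⋆ for all E, F ∈ f(D). -/

import Mathlib

open Submodule

namespace Semistar

/-- A semistar operation on an integral domain `D` with quotient field `K`:
a map on `D`-submodules of `K` satisfying the semistar axioms on nonzero submodules. -/
structure SemistarOp (D K : Type*) [CommRing D] [Field K] [Algebra D K] where
  star : Submodule D K → Submodule D K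
  star_smul_mul : ∀ x : K, x ≠ 0 → ∀ E : Submodule D K, E ≠ ⊥ →
    star (span D {x} * E) = span D {x} * star E
  star_mono : ∀ E F : Submodule D K, E ≠ ⊥ → F ≠ ⊥ → E ≤ F → star E ≤ star F
  le_star : ∀ E : Submodule D K, E ≠ ⊥ → E ≤ star E
  star_star : ∀ E : Submodule D K, E ≠ ⊥ → star (star E) = star E

variable {D K : Type*} [CommRing D] [Field K] [Algebra D K]

/-- The finite-type semistar operation `⋆_f` associated to `⋆`. -/
def finStar (t : Submodule D K → Submodule D K) : Submodule D K → Submodule D K :=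
  fun E => ⨆ F ∈ {F : Submodule D K | F ≠ ⊥ ∧ F.FG ∧ F ≤ E}, t F

/-- The image in `K` of an ideal of `D`. -/
def idealToK (I : Ideal D) : Submodule D K :=
  Submodule.map (Algebra.linearMap D K) I

/-- `I` is a quasi-`⋆`-ideal: a nonzero ideal of `D` with `I^⋆ ∩ D = I`. -/
def IsQuasiIdeal (t : Submodule D K → Submodule D K) (I : Ideal D) : Prop :=
  I ≠ ⊥ ∧ t (idealToK I) ⊓ 1 = idealToK I

/-- `M` is a quasi-`⋆`-maximal ideal: maximal among quasi-`⋆`-ideals. -/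
def IsQuasiMaximal (t : Submodule D K → Submodule D K) (M : Ideal D) : Prop :=
  IsQuasiIdeal t M ∧ ∀ J : Ideal D, IsQuasiIdeal t J → M ≤ J → M = J

/-- The localization `E·D_M` of a submodule `E` of `K` at (the complement of) an ideal `M`. -/
def locAt (M : Ideal D) (E : Submodule D K) : Submodule D K where
  carrier := {x : K | ∃ s ∈ Submonoid.closure ((M : Set D)ᶜ), s • x ∈ E}
  add_mem' := by
    rintro x y ⟨s, hs, hsx⟩ ⟨t, ht, hty⟩
    refine ⟨s * t, mul_mem hs ht, ?_⟩
    have h1 : (s * t) • x ∈ E := by rw [mul_comm, mul_smul]; exact E.smul_mem t hsx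
    have h2 : (s * t) • y ∈ E := by rw [mul_smul]; exact E.smul_mem s hty
    rw [smul_add]; exact E.add_mem h1 h2
  zero_mem' := ⟨1, Submonoid.one_mem _, by simp⟩
  smul_mem' := by
    rintro c x ⟨s, hs, hsx⟩
    exact ⟨s, hs, by rw [smul_comm]; exact E.smul_mem c hsx⟩

/-- The spectral semistar operation `⋆̃` associated to `⋆`, defined by
`E^⋆̃ = ⋂ { E·D_M : M quasi-`⋆_f`-maximal }`. -/
def tildeStar (s : SemistarOp D K) : Submodule D K → Submodule D K :=
  fun E => ⨅ M ∈ {M : Ideal D | IsQuasiMaximal (finStar s.star) M}, locAt M E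

/-- The localizing system `F^⋆` of ideals `I` with `I^⋆ = D^⋆`. -/
def starLS (s : SemistarOp D K) : Set (Ideal D) :=
  {I : Ideal D | I ≠ ⊥ ∧ s.star (idealToK I) = s.star 1}

/-- The stable semistar operation `⋆̄` associated to `⋆`:
`E^⋆̄ = ⋃ {(E : J) : J ∈ F^⋆}`. -/
def barStar (s : SemistarOp D K) : Submodule D K → Submodule D K :=
  fun E => ⨆ J ∈ starLS s, E / idealToK J

/-- `I` is `⋆`-invertible: `(I·I⁻¹)^⋆ = D^⋆`. -/
def IsStarInvertible (t : Submodule D K → Submodule D K) (I : Submodule D K) : Prop :=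
  t (I * (1 / I)) = t 1

/-- `D` is a `⋆`-domain: every nonzero finitely generated `D`-submodule of `K`
is `⋆`-invertible. -/
def IsStarDomain (t : Submodule D K → Submodule D K) : Prop :=
  ∀ I : Submodule D K, I ≠ ⊥ → I.FG → IsStarInvertible t I

/-- `D` is a Prüfer `⋆`-multiplication domain: every nonzero finitely generated
ideal of `D` is `⋆_f`-invertible. -/
def IsPMD (t : Submodule D K → Submodule D K) : Prop :=
  ∀ I : Submodule D K, I ≠ ⊥ → I.FG → I ≤ 1 → IsStarInvertible (finStar t) I

/-- `D` is a P⋆MD for the semistar operation `s`. -/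
abbrev IsPStarMD (s : SemistarOp D K) : Prop := IsPMD s.star

/-- Equality of two semistar operations (as maps on nonzero submodules):
`D` is a `(∗₁, ∗₂)`-domain. -/
def StarEq (t₁ t₂ : Submodule D K → Submodule D K) : Prop :=
  ∀ E : Submodule D K, E ≠ ⊥ → t₁ E = t₂ E

/-- `⋆` is a.b. -/
def IsAB (t : Submodule D K → Submodule D K) : Prop :=
  ∀ E : Submodule D K, E ≠ ⊥ → E.FG → ∀ F G : Submodule D K, F ≠ ⊥ → G ≠ ⊥ →
    t (E * F) ≤ t (E * G) → t F ≤ t G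

/-- `⋆` is e.a.b. -/
def IsEAB (t : Submodule D K → Submodule D K) : Prop :=
  ∀ E F G : Submodule D K, E ≠ ⊥ → E.FG → F ≠ ⊥ → F.FG → G ≠ ⊥ → G.FG →
    t (E * F) ≤ t (E * G) → t F ≤ t G

/-- `D` is quasi-`⋆`-integrally closed: `D^⋆ = ⋃ {(F^⋆ : F^⋆) : F ∈ f(D)}`. -/
def IsQuasiStarIntegrallyClosed (t : Submodule D K → Submodule D K) : Prop :=
  (t 1 : Set K) = ⋃ F ∈ {F : Submodule D K | F ≠ ⊥ ∧ F.FG}, ((t F / t F : Submodule D K) : Set K)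

/-- The submodule `S` of `K` is integrally closed in `K`. -/
def IsIntegrallyClosedIn (S : Submodule D K) : Prop :=
  ∀ x : K, (∃ p : Polynomial K, p.Monic ∧ (∀ i, p.coeff i ∈ S) ∧ Polynomial.eval x p = 0) → x ∈ S

/-- `D` is `⋆`-Noetherian: ACC on quasi-`⋆`-ideals. -/
def IsStarNoetherian (t : Submodule D K → Submodule D K) : Prop :=
  ∀ c : ℕ → Ideal D, (∀ n, IsQuasiIdeal t (c n)) → Monotone c →
    ∃ n, ∀ m, n ≤ m → c m = c n

/-- `D` is `⋆`-extracoherent. -/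
def IsExtraCoherent (t : Submodule D K → Submodule D K) : Prop :=
  ∀ E F : Submodule D K, E ≠ ⊥ → E.FG → F ≠ ⊥ → F.FG → E ⊓ F ≠ ⊥ →
    ∃ J : Submodule D K, J ≠ ⊥ ∧ J.FG ∧ J ≤ E ⊓ F ∧ t J = t E ⊓ t F

/-- `D` is truly `⋆`-coherent. -/
def IsTrulyCoherent (t : Submodule D K → Submodule D K) : Prop :=
  ∀ E F : Submodule D K, E ≠ ⊥ → E.FG → F ≠ ⊥ → F.FG → E ⊓ F ≠ ⊥ →
    ∃ J : Submodule D K, J ≠ ⊥ ∧ J.FG ∧ t J = t (E ⊓ F)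

/-- `D` is `⋆`-coherent. -/
def IsCoherent (t : Submodule D K → Submodule D K) : Prop :=
  ∀ E F : Submodule D K, E ≠ ⊥ → E.FG → F ≠ ⊥ → F.FG → E ⊓ F ≠ ⊥ →
    ∃ J : Submodule D K, J ≠ ⊥ ∧ J.FG ∧ t J = t E ⊓ t F

/-- `D` is `⋆`-quasi-coherent. -/
def IsQuasiCoherent (t : Submodule D K → Submodule D K) : Prop :=
  ∀ F : Submodule D K, F ≠ ⊥ → F.FG →
    ∃ G : Submodule D K, G ≠ ⊥ ∧ G.FG ∧ t ((1 : Submodule D K) / F) = t G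

/-- `D` is an `H(⋆)`-domain. -/
def IsHDomain (t : Submodule D K → Submodule D K) : Prop :=
  ∀ I : Ideal D, I ≠ ⊥ → t (idealToK I) = t 1 →
    ∃ J : Ideal D, J ≠ ⊥ ∧ J.FG ∧ J ≤ I ∧ t (idealToK J) = t 1

/-- `D` is an `I(⋆)`-domain. -/
def IsIDomain (s : SemistarOp D K) : Prop :=
  ∀ I : Submodule D K, I ≠ ⊥ → I.FG → I ≤ 1 →
    (IsStarInvertible s.star I ↔ IsStarInvertible (finStar s.star) I)


section Aux

set_option linter.unusedSectionVars false

variable {D K : Type*} [CommRing D] [IsDomain D] [Field K] [Algebra D K] [IsFractionRing D K]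

private theorem ne_bot_of_mem' {E : Submodule D K} {x : K} (hx : x ∈ E) (h0 : x ≠ 0) : E ≠ ⊥ :=
  E.ne_bot_iff.mpr ⟨x, hx, h0⟩

private theorem mem_mul_one {E : Submodule D K} {x z : K} (hx : x ∈ E)
    (hz : z ∈ (1 : Submodule D K)) : x * z ∈ E := by
  obtain ⟨d, rfl⟩ := Submodule.mem_one.mp hz
  rw [mul_comm, ← Algebra.smul_def]
  exact E.smul_mem d hx

private theorem one_ne_bot' : (1 : Submodule D K) ≠ ⊥ :=
  ne_bot_of_mem' (Submodule.one_le.mp le_rfl) one_ne_zero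

private theorem one_fg : (1 : Submodule D K).FG :=
  ⟨{1}, by rw [Finset.coe_singleton, ← Submodule.one_eq_span]⟩

private theorem exists_algebraMap_mem {E : Submodule D K} (hE : E ≠ ⊥) :
    ∃ d : D, d ≠ 0 ∧ algebraMap D K d ∈ E := by
  obtain ⟨x, hxE, hx0⟩ := E.ne_bot_iff.mp hE
  obtain ⟨b, d, hd⟩ := IsLocalization.exists_integer_multiple (nonZeroDivisors D) x
  have hbx : (b : D) • x ≠ 0 := by
    rw [Algebra.smul_def]
    exact mul_ne_zero
      ((map_ne_zero_iff _ (IsFractionRing.injective D K)).mpr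
        (nonZeroDivisors.ne_zero b.2)) hx0
  refine ⟨d, ?_, ?_⟩
  · rintro rfl
    rw [map_zero] at hd
    exact hbx hd.symm
  · rw [hd]
    exact E.smul_mem _ hxE

private theorem inf_ne_bot' {E F : Submodule D K} (hE : E ≠ ⊥) (hF : F ≠ ⊥) : E ⊓ F ≠ ⊥ := by
  obtain ⟨a, ha0, haE⟩ := exists_algebraMap_mem hE
  obtain ⟨b, hb0, hbF⟩ := exists_algebraMap_mem hF
  refine ne_bot_of_mem' (Submodule.mem_inf.mpr ⟨?_, ?_⟩)
    ((map_ne_zero_iff _ (IsFractionRing.injective D K)).mpr (mul_ne_zero ha0 hb0))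
  · rw [map_mul, mul_comm, ← Algebra.smul_def]
    exact E.smul_mem b haE
  · rw [map_mul, ← Algebra.smul_def]
    exact F.smul_mem a hbF

private theorem mul_ne_bot' {E F : Submodule D K} (hE : E ≠ ⊥) (hF : F ≠ ⊥) : E * F ≠ ⊥ := by
  obtain ⟨x, hxE, hx0⟩ := E.ne_bot_iff.mp hE
  obtain ⟨y, hyF, hy0⟩ := F.ne_bot_iff.mp hF
  exact ne_bot_of_mem' (Submodule.mul_mem_mul hxE hyF) (mul_ne_zero hx0 hy0)

private theorem one_div_ne_bot {F : Submodule D K} (hFg : F.FG) :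
    ((1 : Submodule D K) / F) ≠ ⊥ := by
  obtain ⟨S, rfl⟩ := hFg
  obtain ⟨b, hb⟩ := IsLocalization.exist_integer_multiples_of_finset (nonZeroDivisors D) S
  refine ne_bot_of_mem' (x := algebraMap D K b) ?_
    ((map_ne_zero_iff _ (IsFractionRing.injective D K)).mpr (nonZeroDivisors.ne_zero b.2))
  rw [Submodule.mem_div_iff_forall_mul_mem]
  intro y hy
  have hle : Submodule.span D (S : Set K) ≤
      Submodule.comap (LinearMap.mulLeft D (algebraMap D K b)) 1 := by
    rw [Submodule.span_le]
    intro a ha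
    obtain ⟨d, hd⟩ := hb a ha
    simp only [SetLike.mem_coe, Submodule.mem_comap, LinearMap.mulLeft_apply]
    rw [← Algebra.smul_def]
    exact Submodule.mem_one.mpr ⟨d, hd⟩
  simpa only [Submodule.mem_comap, LinearMap.mulLeft_apply] using hle hy

private theorem mul_one_div_le' {E F : Submodule D K} : E * (1 / F) ≤ E / F := by
  rw [Submodule.mul_le]
  intro e he y hy
  rw [Submodule.mem_div_iff_forall_mul_mem]
  intro f hf
  rw [mul_assoc]
  exact mem_mul_one he (Submodule.mem_div_iff_forall_mul_mem.mp hy f hf)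

private theorem div_ne_bot' {E F : Submodule D K} (hE : E ≠ ⊥) (hFg : F.FG) : E / F ≠ ⊥ := by
  intro h
  exact mul_ne_bot' hE (one_div_ne_bot (F := F) hFg) (le_bot_iff.mp (h ▸ mul_one_div_le'))

private theorem mul_one_div_le_one' {A C : Submodule D K} (h : A ≤ C) : A * (1 / C) ≤ 1 := by
  rw [Submodule.mul_le]
  intro a ha y hy
  rw [mul_comm]
  exact Submodule.mem_div_iff_forall_mul_mem.mp hy a (h ha)

private theorem star_ne_bot (s : SemistarOp D K) {E : Submodule D K} (hE : E ≠ ⊥) :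
    s.star E ≠ ⊥ := fun h => hE (le_bot_iff.mp (h ▸ s.le_star E hE))

private theorem star_one_mem (s : SemistarOp D K) : (1 : K) ∈ s.star 1 :=
  s.le_star 1 one_ne_bot' (Submodule.one_le.mp le_rfl)

private theorem star_mul_le (s : SemistarOp D K) {E F : Submodule D K} (hE : E ≠ ⊥)
    (hF : F ≠ ⊥) : s.star E * F ≤ s.star (E * F) := by
  rw [Submodule.mul_le]
  intro a ha f hf
  rcases eq_or_ne f 0 with rfl | hf0
  · rw [mul_zero]; exact zero_mem _
  have h1 : Submodule.span D {f} * E ≠ ⊥ :=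
    mul_ne_bot' (ne_bot_of_mem' (Submodule.mem_span_singleton_self f) hf0) hE
  have h2 : Submodule.span D {f} * E ≤ E * F := by
    rw [mul_comm]
    exact mul_le_mul_right ((Submodule.span_singleton_le_iff_mem f F).mpr hf) _
  have key : a * f ∈ Submodule.span D {f} * s.star E := by
    rw [mul_comm a f]
    exact Submodule.mul_mem_mul (Submodule.mem_span_singleton_self f) ha
  rw [← s.star_smul_mul f hf0 E hE] at key
  exact s.star_mono _ _ h1 (mul_ne_bot' hE hF) h2 key

private theorem star_star_mul (s : SemistarOp D K) {E F : Submodule D K} (hE : E ≠ ⊥)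
    (hF : F ≠ ⊥) : s.star (s.star E * F) = s.star (E * F) := by
  have hEF : E * F ≠ ⊥ := mul_ne_bot' hE hF
  have h1 : E * F ≤ s.star E * F := mul_le_mul_left (s.le_star E hE) _
  have h2 : s.star E * F ≠ ⊥ := fun h => hEF (le_bot_iff.mp (h ▸ h1))
  apply le_antisymm
  · have h3 := s.star_mono _ _ h2 (star_ne_bot s hEF) (star_mul_le s hE hF)
    rwa [s.star_star _ hEF] at h3
  · exact s.star_mono _ _ hEF h2 h1

private theorem star_div_eq (s : SemistarOp D K) (hd : IsStarDomain s.star)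
    {E F : Submodule D K} (hE : E ≠ ⊥) (hF : F ≠ ⊥) (hFg : F.FG) :
    s.star E / F = s.star (E * (1 / F)) := by
  have hFi : (1 / F : Submodule D K) ≠ ⊥ := one_div_ne_bot hFg
  have hEFi : E * (1 / F) ≠ ⊥ := mul_ne_bot' hE hFi
  apply le_antisymm
  · intro x hx
    rcases eq_or_ne x 0 with rfl | hx0
    · exact zero_mem _
    have hFF : F * (1 / F) ≠ ⊥ := mul_ne_bot' hF hFi
    have h1 : Submodule.span D {x} * F ≤ s.star E := by
      rw [Submodule.mul_le]
      intro c hc f hf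
      obtain ⟨e, rfl⟩ := Submodule.mem_span_singleton.mp hc
      rw [smul_mul_assoc]
      exact Submodule.smul_mem _ e (Submodule.mem_div_iff_forall_mul_mem.mp hx f hf)
    have h2 : Submodule.span D {x} * (F * (1 / F)) ≤ s.star (E * (1 / F)) := by
      rw [← mul_assoc]
      exact le_trans (mul_le_mul_left h1 _) (star_mul_le s hE hFi)
    have hx' : Submodule.span D {x} ≠ ⊥ :=
      ne_bot_of_mem' (Submodule.mem_span_singleton_self x) hx0
    have h3 := s.star_mono _ _ (mul_ne_bot' hx' hFF) (star_ne_bot s hEFi) h2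
    rw [s.star_star _ hEFi, s.star_smul_mul x hx0 _ hFF] at h3
    have hinv : s.star (F * (1 / F)) = s.star 1 := hd F hF hFg
    rw [hinv] at h3
    have hxm : x ∈ Submodule.span D {x} * s.star 1 := by
      simpa using Submodule.mul_mem_mul (Submodule.mem_span_singleton_self x) (star_one_mem s)
    exact h3 hxm
  · rw [Submodule.le_div_iff_mul_le]
    refine le_trans (star_mul_le s hEFi hF) (s.star_mono _ _ (mul_ne_bot' hEFi hF) hE ?_)
    rw [mul_assoc]
    refine le_trans (mul_le_mul_right ?_ _) (le_of_eq (mul_one E))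
    rw [mul_comm]
    exact Submodule.mul_one_div_le_one

private theorem div_le_div_of_le {E E' F : Submodule D K} (h : E ≤ E') : E / F ≤ E' / F := by
  intro x hx
  rw [Submodule.mem_div_iff_forall_mul_mem] at hx ⊢
  exact fun y hy => h (hx y hy)

private theorem star_div' (s : SemistarOp D K) (hd : IsStarDomain s.star)
    {E F : Submodule D K} (hE : E ≠ ⊥) (hF : F ≠ ⊥) (hFg : F.FG) :
    s.star (E / F) = s.star E / F := by
  have hFi : (1 / F : Submodule D K) ≠ ⊥ := one_div_ne_bot hFg
  have hEFi : E * (1 / F) ≠ ⊥ := mul_ne_bot' hE hFi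
  have hEF : E / F ≠ ⊥ := div_ne_bot' hE hFg
  rw [star_div_eq s hd hE hF hFg]
  apply le_antisymm
  · have h2 : E / F ≤ s.star (E * (1 / F)) := by
      rw [← star_div_eq s hd hE hF hFg]
      exact div_le_div_of_le (s.le_star E hE)
    have := s.star_mono _ _ hEF (star_ne_bot s hEFi) h2
    rwa [s.star_star _ hEFi] at this
  · exact s.star_mono _ _ hEFi hEF mul_one_div_le'

private theorem star_one_mul_mem (s : SemistarOp D K) (hd : IsStarDomain s.star)
    {F : Submodule D K} (hF : F ≠ ⊥) (hFg : F.FG) {d x : K}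
    (hd1 : d ∈ s.star 1) (hx : x ∈ s.star F) : d * x ∈ s.star F := by
  rcases eq_or_ne d 0 with rfl | hd0
  · rw [zero_mul]; exact zero_mem _
  have h1 : d ∈ s.star F / F := by
    rw [star_div_eq s hd hF hF hFg]
    have hinv : s.star (F * (1 / F)) = s.star 1 := hd F hF hFg
    rw [hinv]
    exact hd1
  have hd' : Submodule.span D {d} ≠ ⊥ :=
    ne_bot_of_mem' (Submodule.mem_span_singleton_self d) hd0
  have h2 : Submodule.span D {d} * F ≤ s.star F := by
    rw [Submodule.mul_le]
    intro c hc f hf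
    obtain ⟨e, rfl⟩ := Submodule.mem_span_singleton.mp hc
    rw [smul_mul_assoc]
    exact Submodule.smul_mem _ e (Submodule.mem_div_iff_forall_mul_mem.mp h1 f hf)
  have h3 := s.star_mono _ _ (mul_ne_bot' hd' hF) (star_ne_bot s hF) h2
  rw [s.star_star _ hF, s.star_smul_mul d hd0 F hF] at h3
  exact h3 (Submodule.mul_mem_mul (Submodule.mem_span_singleton_self d) hx)

private theorem star_inf (s : SemistarOp D K) (hd : IsStarDomain s.star)
    {E F : Submodule D K} (hE : E ≠ ⊥) (hEg : E.FG) (hF : F ≠ ⊥) (hFg : F.FG) :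
    s.star (E ⊓ F) = s.star E ⊓ s.star F := by
  have hEF : E ⊓ F ≠ ⊥ := inf_ne_bot' hE hF
  apply le_antisymm
  · exact le_inf (s.star_mono _ _ hEF hE inf_le_left) (s.star_mono _ _ hEF hF inf_le_right)
  intro x hx
  have hC0 : E ⊔ F ≠ ⊥ := fun h => hE (le_bot_iff.mp (h ▸ le_sup_left))
  have hCg : (E ⊔ F).FG := hEg.sup hFg
  have hP : E * F ≠ ⊥ := mul_ne_bot' hE hF
  have hx1 : x ∈ s.star (E * F) / (E ⊔ F) := by
    rw [Submodule.mem_div_iff_forall_mul_mem]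
    intro c hc
    obtain ⟨e, he, f, hf, rfl⟩ := Submodule.mem_sup.mp hc
    rw [mul_add]
    apply add_mem
    · have h' : x * e ∈ s.star F * E := Submodule.mul_mem_mul (Submodule.mem_inf.mp hx).2 he
      have h'' := star_mul_le s hF hE h'
      rwa [mul_comm F E] at h''
    · exact star_mul_le s hE hF (Submodule.mul_mem_mul (Submodule.mem_inf.mp hx).1 hf)
  rw [star_div_eq s hd hP hC0 hCg] at hx1
  have hkey : E * F * (1 / (E ⊔ F)) ≤ E ⊓ F := by
    apply le_inf
    · rw [mul_assoc]
      exact le_trans (mul_le_mul_right (mul_one_div_le_one' le_sup_right) _)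
        (le_of_eq (mul_one E))
    · rw [mul_comm E F, mul_assoc]
      exact le_trans (mul_le_mul_right (mul_one_div_le_one' le_sup_left) _)
        (le_of_eq (mul_one F))
  have hne : E * F * (1 / (E ⊔ F)) ≠ ⊥ := mul_ne_bot' hP (one_div_ne_bot hCg)
  exact s.star_mono _ _ hne hEF hkey hx1

private theorem mem_idealToK {I : Ideal D} {x : K} :
    x ∈ (idealToK I : Submodule D K) ↔ ∃ d ∈ I, algebraMap D K d = x := by
  simp [idealToK, Submodule.mem_map, Algebra.linearMap_apply]

private theorem idealToK_le_one {I : Ideal D} : (idealToK I : Submodule D K) ≤ 1 := by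
  intro x hx
  obtain ⟨d, _, rfl⟩ := mem_idealToK.mp hx
  exact Submodule.algebraMap_mem d

private theorem idealToK_ne_bot {I : Ideal D} (hI : I ≠ ⊥) :
    (idealToK I : Submodule D K) ≠ ⊥ := by
  obtain ⟨d, hdI, hd0⟩ := I.ne_bot_iff.mp hI
  exact ne_bot_of_mem' (mem_idealToK.mpr ⟨d, hdI, rfl⟩)
    ((map_ne_zero_iff _ (IsFractionRing.injective D K)).mpr hd0)

private theorem idealToK_bot : (idealToK (⊥ : Ideal D) : Submodule D K) = ⊥ := by
  rw [idealToK, Submodule.map_bot]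

private theorem idealToK_mul {I J : Ideal D} :
    (idealToK (I * J) : Submodule D K) = idealToK I * idealToK J := by
  have h : Algebra.linearMap D K = (Algebra.ofId D K).toLinearMap :=
    LinearMap.ext fun x => rfl
  simp only [idealToK, h]
  exact Submodule.map_mul I J (Algebra.ofId D K)

private theorem idealToK_mono {I J : Ideal D} (h : I ≤ J) :
    (idealToK I : Submodule D K) ≤ idealToK J :=
  Submodule.map_mono h

private theorem idealToK_top : (idealToK (⊤ : Ideal D) : Submodule D K) = 1 := by
  rw [idealToK, Submodule.map_top, Submodule.one_eq_range]

private theorem top_mem_starLS (s : SemistarOp D K) : (⊤ : Ideal D) ∈ starLS s := by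
  refine ⟨fun h => ?_, by rw [idealToK_top]⟩
  have h1 : (1 : D) ∈ (⊥ : Ideal D) := h ▸ Submodule.mem_top
  exact one_ne_zero ((Submodule.mem_bot D).mp h1)

private theorem mul_mem_starLS (s : SemistarOp D K) {I J : Ideal D}
    (hI : I ∈ starLS s) (hJ : J ∈ starLS s) : I * J ∈ starLS s := by
  obtain ⟨hI0, hIs⟩ := hI
  obtain ⟨hJ0, hJs⟩ := hJ
  have hIk : (idealToK I : Submodule D K) ≠ ⊥ := idealToK_ne_bot hI0
  have hJk : (idealToK J : Submodule D K) ≠ ⊥ := idealToK_ne_bot hJ0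
  constructor
  · intro h
    apply mul_ne_bot' hIk hJk
    rw [← idealToK_mul, h, idealToK_bot]
  · rw [idealToK_mul, ← star_star_mul s hIk hJk, hIs,
      star_star_mul s one_ne_bot' hJk, one_mul, hJs]

private theorem mem_barStar_iff (s : SemistarOp D K) {A : Submodule D K} {x : K} :
    x ∈ barStar s A ↔ ∃ J ∈ starLS s, x ∈ A / (idealToK J : Submodule D K) := by
  have hne : Nonempty {J : Ideal D // J ∈ starLS s} := ⟨⟨⊤, top_mem_starLS s⟩⟩
  have hdir : Directed (· ≤ ·)
      (fun J : {J : Ideal D // J ∈ starLS s} => A / (idealToK J.1 : Submodule D K)) := by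
    rintro ⟨J₁, h₁⟩ ⟨J₂, h₂⟩
    refine ⟨⟨J₁ * J₂, mul_mem_starLS s h₁ h₂⟩, ?_, ?_⟩
    · intro x hx
      rw [Submodule.mem_div_iff_forall_mul_mem] at hx ⊢
      exact fun y hy => hx y (idealToK_mono Ideal.mul_le_left hy)
    · intro x hx
      rw [Submodule.mem_div_iff_forall_mul_mem] at hx ⊢
      exact fun y hy => hx y (idealToK_mono Ideal.mul_le_right hy)
  rw [barStar, iSup_subtype', Submodule.mem_iSup_of_directed _ hdir]
  constructor
  · rintro ⟨⟨J, hJ⟩, hx⟩; exact ⟨J, hJ, hx⟩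
  · rintro ⟨J, hJ, hx⟩; exact ⟨⟨J, hJ⟩, hx⟩

private theorem barStar_le_star (s : SemistarOp D K) {A : Submodule D K} (hA : A ≠ ⊥) :
    barStar s A ≤ s.star A := by
  intro x hx
  obtain ⟨J, ⟨hJ0, hJs⟩, hxd⟩ := (mem_barStar_iff s).mp hx
  rcases eq_or_ne x 0 with rfl | hx0
  · exact zero_mem _
  have hJk : (idealToK J : Submodule D K) ≠ ⊥ := idealToK_ne_bot hJ0
  have hx' : Submodule.span D {x} ≠ ⊥ :=
    ne_bot_of_mem' (Submodule.mem_span_singleton_self x) hx0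
  have h1 : Submodule.span D {x} * idealToK J ≤ A := by
    rw [Submodule.mul_le]
    intro c hc y hy
    obtain ⟨e, rfl⟩ := Submodule.mem_span_singleton.mp hc
    rw [smul_mul_assoc]
    exact A.smul_mem e (Submodule.mem_div_iff_forall_mul_mem.mp hxd y hy)
  have h2 := s.star_mono _ _ (mul_ne_bot' hx' hJk) hA h1
  rw [s.star_smul_mul x hx0 _ hJk, hJs] at h2
  refine h2 ?_
  simpa using Submodule.mul_mem_mul (Submodule.mem_span_singleton_self x) (star_one_mem s)

private theorem star_eq_barStar (s : SemistarOp D K) (hd : IsStarDomain s.star)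
    {F : Submodule D K} (hF : F ≠ ⊥) (hFg : F.FG) : barStar s F = s.star F := by
  apply le_antisymm (barStar_le_star s hF)
  intro x hx
  rcases eq_or_ne x 0 with rfl | hx0
  · exact zero_mem _
  have hxi0 : x⁻¹ ≠ (0 : K) := inv_ne_zero hx0
  have hsx : (Submodule.span D {x⁻¹} : Submodule D K) ≠ ⊥ :=
    ne_bot_of_mem' (Submodule.mem_span_singleton_self _) hxi0
  have hsxF : Submodule.span D {x⁻¹} * F ≠ ⊥ := mul_ne_bot' hsx hF
  have hM0 : Submodule.span D {x⁻¹} * F ⊓ 1 ≠ ⊥ := inf_ne_bot' hsxF one_ne_bot'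
  have hMg : (Submodule.span D {x⁻¹} * F).FG := (Submodule.fg_span_singleton _).mul hFg
  have hstarM : s.star (Submodule.span D {x⁻¹} * F ⊓ 1) = s.star 1 := by
    rw [star_inf s hd hsxF hMg one_ne_bot' one_fg, s.star_smul_mul x⁻¹ hxi0 F hF]
    refine le_antisymm inf_le_right (le_inf ?_ le_rfl)
    intro d hd1
    have hmem := Submodule.mul_mem_mul (Submodule.mem_span_singleton_self x⁻¹)
      (star_one_mul_mem s hd hF hFg hd1 hx)
    simpa [mul_comm d x, inv_mul_cancel_left₀ hx0] using hmem
  have hM1 : Submodule.span D {x⁻¹} * F ⊓ 1 ≤ (1 : Submodule D K) := inf_le_right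
  set J : Ideal D :=
    Submodule.comap (Algebra.linearMap D K) (Submodule.span D {x⁻¹} * F ⊓ 1) with hJdef
  have hJK : (idealToK J : Submodule D K) = Submodule.span D {x⁻¹} * F ⊓ 1 := by
    rw [idealToK, hJdef, Submodule.map_comap_eq, ← Submodule.one_eq_range]
    exact inf_eq_right.mpr hM1
  have hJ0 : J ≠ ⊥ := by
    intro h
    apply hM0
    rw [← hJK, h, idealToK_bot]
  refine (mem_barStar_iff s).mpr ⟨J, ⟨hJ0, by rw [hJK, hstarM]⟩, ?_⟩
  rw [Submodule.mem_div_iff_forall_mul_mem]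
  intro y hy
  rw [hJK] at hy
  obtain ⟨f, hfF, hfe⟩ := Submodule.mem_span_singleton_mul.mp (Submodule.mem_inf.mp hy).1
  rw [← hfe, mul_inv_cancel_left₀ hx0]
  exact hfF

private theorem barStar_inf (s : SemistarOp D K) {A B : Submodule D K} :
    barStar s (A ⊓ B) = barStar s A ⊓ barStar s B := by
  apply le_antisymm
  · apply le_inf
    · refine iSup₂_le fun J hJ => ?_
      refine le_trans (div_le_div_of_le inf_le_left) ?_
      exact le_iSup₂ (f := fun J (_ : J ∈ starLS s) => A / (idealToK J : Submodule D K)) J hJ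
    · refine iSup₂_le fun J hJ => ?_
      refine le_trans (div_le_div_of_le inf_le_right) ?_
      exact le_iSup₂ (f := fun J (_ : J ∈ starLS s) => B / (idealToK J : Submodule D K)) J hJ
  · intro x hx
    obtain ⟨J₁, h₁, hx₁⟩ := (mem_barStar_iff s).mp (Submodule.mem_inf.mp hx).1
    obtain ⟨J₂, h₂, hx₂⟩ := (mem_barStar_iff s).mp (Submodule.mem_inf.mp hx).2
    refine (mem_barStar_iff s).mpr ⟨J₁ * J₂, mul_mem_starLS s h₁ h₂, ?_⟩
    rw [Submodule.mem_div_iff_forall_mul_mem]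
    intro y hy
    refine Submodule.mem_inf.mpr ⟨?_, ?_⟩
    · exact Submodule.mem_div_iff_forall_mul_mem.mp hx₁ y (idealToK_mono Ideal.mul_le_left hy)
    · exact Submodule.mem_div_iff_forall_mul_mem.mp hx₂ y (idealToK_mono Ideal.mul_le_right hy)

private theorem barStar_finset_inf (s : SemistarOp D K) {ι : Type*} [DecidableEq ι]
    (T : Finset ι) (G : ι → Submodule D K) :
    barStar s ((⨅ i ∈ T, G i) ⊓ 1) = (⨅ i ∈ T, barStar s (G i)) ⊓ barStar s 1 := by
  induction T using Finset.induction_on with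
  | empty => simp
  | @insert a T ha ih =>
    rw [Finset.iInf_insert, Finset.iInf_insert, inf_assoc, barStar_inf s, ih, inf_assoc]

private theorem finset_inf_one_ne_bot {ι : Type*} (T : Finset ι) (G : ι → Submodule D K)
    (h : ∀ i ∈ T, G i ≠ ⊥) : ((⨅ i ∈ T, G i) ⊓ 1 : Submodule D K) ≠ ⊥ := by
  classical
  induction T using Finset.induction_on with
  | empty => simpa using one_ne_bot'
  | @insert a T ha ih =>
    rw [Finset.iInf_insert, inf_assoc]
    exact inf_ne_bot' (h a (Finset.mem_insert_self a T))
      (ih fun i hi => h i (Finset.mem_insert_of_mem hi))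

private theorem span_filter_ne_zero {S : Finset K} [DecidableEq K] :
    Submodule.span D ((S.filter (· ≠ (0:K))) : Set K) = Submodule.span D (S : Set K) := by
  apply le_antisymm
  · exact Submodule.span_mono (by intro a ha; exact (Finset.mem_filter.mp (by exact_mod_cast ha)).1)
  · refine le_trans (Submodule.span_mono ?_) (le_of_eq Submodule.span_insert_zero)
    intro a ha
    rcases eq_or_ne a 0 with rfl | h
    · exact Set.mem_insert _ _
    · refine Set.mem_insert_of_mem _ ?_
      simp only [Finset.coe_filter, Set.mem_setOf_eq]
      exact ⟨by exact_mod_cast ha, h⟩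

private theorem div_span_eq_inf {A : Submodule D K} {S : Finset K}
    (h0 : ∀ f ∈ S, f ≠ (0:K)) :
    A / (Submodule.span D (S : Set K)) = ⨅ f ∈ S, Submodule.span D {f⁻¹} * A := by
  ext x
  simp only [Submodule.mem_div_iff_forall_mul_mem, Submodule.mem_iInf]
  constructor
  · intro hx f hf
    have hxf : x * f ∈ A := hx f (Submodule.subset_span hf)
    have hm := Submodule.mul_mem_mul (Submodule.mem_span_singleton_self (f⁻¹)) hxf
    rwa [show f⁻¹ * (x * f) = x by rw [mul_comm x f, inv_mul_cancel_left₀ (h0 f hf)]] at hm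
  · intro hx y hy
    have hle : Submodule.span D (S : Set K) ≤
        Submodule.comap (LinearMap.mulLeft D x) A := by
      rw [Submodule.span_le]
      intro f hf
      have hf' : f ∈ S := by exact_mod_cast hf
      obtain ⟨a, haA, hae⟩ := Submodule.mem_span_singleton_mul.mp (hx f hf')
      have hxf : x * f = a := by
        rw [← hae, mul_comm f⁻¹ a, mul_assoc, inv_mul_cancel₀ (h0 f hf'), mul_one]
      simp only [SetLike.mem_coe, Submodule.mem_comap, LinearMap.mulLeft_apply]
      rw [hxf]
      exact haA
    simpa only [Submodule.mem_comap, LinearMap.mulLeft_apply] using hle hy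

private theorem claim1 (s : SemistarOp D K) (hd : IsStarDomain s.star)
    {E F : Submodule D K} (hE : E ≠ ⊥) (hEg : E.FG) (hF : F ≠ ⊥) (hFg : F.FG) :
    s.star (E / F ⊓ 1) = (s.star E / F) ⊓ s.star 1 := by
  classical
  obtain ⟨S₀, hS₀⟩ := hFg
  have hFg' : F.FG := ⟨S₀, hS₀⟩
  set S := S₀.filter (· ≠ (0:K)) with hSdef
  have hspan : Submodule.span D (S : Set K) = F := by
    rw [hSdef, span_filter_ne_zero, hS₀]
  have h0 : ∀ f ∈ S, f ≠ (0:K) := fun f hf => (Finset.mem_filter.mp hf).2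
  have hdivE : E / F = ⨅ f ∈ S, Submodule.span D {f⁻¹} * E := by
    rw [← hspan]; exact div_span_eq_inf h0
  have hdivsE : s.star E / F = ⨅ f ∈ S, Submodule.span D {f⁻¹} * s.star E := by
    rw [← hspan]; exact div_span_eq_inf h0
  have hG : ∀ f ∈ S, (Submodule.span D {f⁻¹} * E : Submodule D K) ≠ ⊥ := fun f hf =>
    mul_ne_bot' (ne_bot_of_mem' (Submodule.mem_span_singleton_self _)
      (inv_ne_zero (h0 f hf))) hE
  have hGg : ∀ f ∈ S, (Submodule.span D {f⁻¹} * E : Submodule D K).FG := fun f hf =>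
    (Submodule.fg_span_singleton _).mul hEg
  have hne : (E / F ⊓ 1 : Submodule D K) ≠ ⊥ := by
    rw [hdivE]; exact finset_inf_one_ne_bot S _ hG
  apply le_antisymm
  · apply le_inf
    · have h1 : s.star (E / F ⊓ 1) ≤ s.star (E / F) :=
        s.star_mono _ _ hne (div_ne_bot' hE hFg') inf_le_left
      rwa [star_div' s hd hE hF hFg'] at h1
    · exact s.star_mono _ _ hne one_ne_bot' inf_le_right
  · have hterm : ∀ f ∈ S, Submodule.span D {f⁻¹} * s.star E
        = barStar s (Submodule.span D {f⁻¹} * E) := by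
      intro f hf
      rw [star_eq_barStar s hd (hG f hf) (hGg f hf),
        s.star_smul_mul f⁻¹ (inv_ne_zero (h0 f hf)) E hE]
    calc (s.star E / F) ⊓ s.star 1
        = (⨅ f ∈ S, barStar s (Submodule.span D {f⁻¹} * E)) ⊓ barStar s 1 := by
          rw [hdivsE, star_eq_barStar s hd one_ne_bot' one_fg]
          congr 1
          exact iInf_congr fun f => iInf_congr fun hf => hterm f hf
      _ = barStar s ((⨅ f ∈ S, Submodule.span D {f⁻¹} * E) ⊓ 1) :=
          (barStar_finset_inf s S _).symm
      _ ≤ s.star ((⨅ f ∈ S, Submodule.span D {f⁻¹} * E) ⊓ 1) :=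
          barStar_le_star s (by rw [← hdivE]; exact hne)
      _ = s.star (E / F ⊓ 1) := by rw [← hdivE]

private theorem claim2 (s : SemistarOp D K) (hd : IsStarDomain s.star) :
    StarEq (finStar (barStar s)) (finStar s.star) := by
  intro E _
  have key : ∀ F ∈ {F : Submodule D K | F ≠ ⊥ ∧ F.FG ∧ F ≤ E},
      barStar s F = s.star F := fun F hF => star_eq_barStar s hd hF.1 hF.2.1
  unfold finStar
  apply le_antisymm
  · refine iSup₂_le fun F hF => ?_
    exact (key F hF).le.trans
      (le_iSup₂ (f := fun F (_ : F ∈ {F : Submodule D K | F ≠ ⊥ ∧ F.FG ∧ F ≤ E}) => s.star F)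
        F hF)
  · refine iSup₂_le fun F hF => ?_
    exact (key F hF).ge.trans
      (le_iSup₂ (f := fun F (_ : F ∈ {F : Submodule D K | F ≠ ⊥ ∧ F.FG ∧ F ≤ E}) =>
        barStar s F) F hF)

end Aux


theorem statement6 {D K : Type*} [CommRing D] [IsDomain D] [Field K] [Algebra D K]
    [IsFractionRing D K] (s : SemistarOp D K)
    (hic : IsIntegrallyClosed D) (h : IsStarDomain s.star) :
    (∀ E F : Submodule D K, E ≠ ⊥ → E.FG → F ≠ ⊥ → F.FG →
      s.star (E / F ⊓ 1) = (s.star E / F) ⊓ s.star 1) ∧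
    StarEq (finStar (barStar s)) (finStar s.star) ∧
    (∀ E F : Submodule D K, E ≠ ⊥ → E.FG → F ≠ ⊥ → F.FG →
      s.star (E ⊓ F) = s.star E ⊓ s.star F) := by
  refine ⟨fun E F hE hEg hF hFg => claim1 s h hE hEg hF hFg,
    claim2 s h,
    fun E F hE hEg hF hFg => star_inf s h hE hEg hF hFg⟩

end Semistar
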